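/- arXiv:1010.6118 — 2 statements merged into one kernel-verified Lean document; each statement's English description precedes it below -/
import Mathlib

section
/- The integral of log(x)·log(1−x) over [0,1] equals 2 − π²/6. -/
open MeasureTheory Set Filter Topology intervalIntegral

lemma contLogPow (n : ℕ) : Continuous fun x : ℝ => Real.log x * x ^ (n + 1) := by
  have h : (fun x : ℝ => Real.log x * x ^ (n + 1)) = fun x => (x * Real.log x) * x ^ n := by
    funext x; ring
  rw [h]
  exact Real.continuous_mul_log.mul (continuous_pow n)

lemma integral_log_mul_pow (n : ℕ) :
    ∫ x in (0:ℝ)..1, Real.log x * x ^ (n + 1) = -(1 / ((n : ℝ) + 2) ^ 2) := by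
  set F : ℝ → ℝ := fun x => x ^ (n + 2) * Real.log x / ((n : ℝ) + 2)
      - x ^ (n + 2) / ((n : ℝ) + 2) ^ 2 with hF
  have h2 : (0:ℝ) < (n:ℝ) + 2 := by positivity
  have hcontF : Continuous F := by
    have hcm : Continuous fun x : ℝ => x ^ (n + 2) * Real.log x := by
      have h : (fun x : ℝ => x ^ (n + 2) * Real.log x)
          = fun x => x ^ (n + 1) * (x * Real.log x) := by funext x; ring
      rw [h]; exact (continuous_pow _).mul Real.continuous_mul_log
    exact (hcm.div_const _).sub ((continuous_pow _).div_const _)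
  have hderiv : ∀ x ∈ Ioo (0:ℝ) 1,
      HasDerivWithinAt F (Real.log x * x ^ (n + 1)) (Ioi x) x := by
    intro x hx
    have hx0 : x ≠ 0 := ne_of_gt hx.1
    have h1 : HasDerivAt (fun x : ℝ => x ^ (n + 2) * Real.log x)
        ((n + 2 : ℕ) * x ^ (n + 1) * Real.log x + x ^ (n + 2) * x⁻¹) x := by
      exact ((hasDerivAt_pow (n + 2) x).mul (Real.hasDerivAt_log hx0)).congr_deriv (by simp)
    have h3 : HasDerivAt F
        (((n + 2 : ℕ) * x ^ (n + 1) * Real.log x + x ^ (n + 2) * x⁻¹) / ((n : ℝ) + 2)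
          - (n + 2 : ℕ) * x ^ (n + 1) / ((n : ℝ) + 2) ^ 2) x := by
      exact (h1.div_const _).sub ((hasDerivAt_pow (n + 2) x).div_const _)
    have heq : ((n + 2 : ℕ) * x ^ (n + 1) * Real.log x + x ^ (n + 2) * x⁻¹) / ((n : ℝ) + 2)
          - (n + 2 : ℕ) * x ^ (n + 1) / ((n : ℝ) + 2) ^ 2
        = Real.log x * x ^ (n + 1) := by
      push_cast
      field_simp
      ring
    rw [heq] at h3
    exact h3.hasDerivWithinAt
  have hint : IntervalIntegrable (fun x => Real.log x * x ^ (n + 1)) volume 0 1 :=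
    (contLogPow n).intervalIntegrable 0 1
  rw [integral_eq_sub_of_hasDeriv_right_of_le zero_le_one hcontF.continuousOn hderiv hint]
  simp [hF, Real.log_one, zero_pow (by omega : n + 2 ≠ 0)]

lemma hasSum_aux : HasSum (fun n : ℕ => 1 / (((n:ℝ) + 1) * ((n:ℝ) + 2) ^ 2))
    (2 - Real.pi ^ 2 / 6) := by
  have ht : HasSum (fun n : ℕ => 1 / ((n:ℝ) + 1) - 1 / ((n:ℝ) + 2)) 1 := by
    have hnn : ∀ n : ℕ, 0 ≤ 1 / ((n:ℝ) + 1) - 1 / ((n:ℝ) + 2) := by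
      intro n
      have : (1:ℝ) / ((n:ℝ) + 2) ≤ 1 / ((n:ℝ) + 1) := by
        apply one_div_le_one_div_of_le <;> [positivity; linarith]
      linarith
    rw [hasSum_iff_tendsto_nat_of_nonneg hnn]
    have hps : ∀ N : ℕ, ∑ i ∈ Finset.range N, (1 / ((i:ℝ) + 1) - 1 / ((i:ℝ) + 2))
        = 1 - 1 / ((N:ℝ) + 1) := by
      intro N
      have := Finset.sum_range_sub' (f := fun n : ℕ => 1 / ((n:ℝ) + 1)) N
      simpa [Nat.cast_add, Nat.cast_one, add_assoc, one_add_one_eq_two] using this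
    simp only [hps]
    have := tendsto_one_div_add_atTop_nhds_zero_nat (𝕜 := ℝ)
    have h' := tendsto_const_nhds (x := (1:ℝ)) (f := atTop).sub this
    simpa using h'
  have hz : HasSum (fun n : ℕ => 1 / ((n:ℝ) + 2) ^ 2) (Real.pi ^ 2 / 6 - 1) := by
    have h := (hasSum_nat_add_iff' (f := fun n : ℕ => (1:ℝ) / (n : ℝ) ^ 2) 2).mpr hasSum_zeta_two
    have hs : ∑ i ∈ Finset.range 2, (1:ℝ) / (i : ℝ) ^ 2 = 1 := by
      norm_num [Finset.sum_range_succ]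
    rw [hs] at h
    convert h using 2 with n
    · rfl
    push_cast
    ring_nf
  have hsub := ht.sub hz
  have hval : (1:ℝ) - (Real.pi ^ 2 / 6 - 1) = 2 - Real.pi ^ 2 / 6 := by ring
  rw [hval] at hsub
  convert hsub using 2 with n
  · rfl
  have h1 : ((n:ℝ) + 1) ≠ 0 := by positivity
  have h2 : ((n:ℝ) + 2) ≠ 0 := by positivity
  field_simp
  ring

theorem log_mul_log_integral :
    ∫ x in (0:ℝ)..1, Real.log x * Real.log (1 - x) = 2 - Real.pi ^ 2 / 6 := by
  set g : ℕ → ℝ → ℝ := fun n x => -(Real.log x * (x ^ (n + 1) / ((n:ℝ) + 1))) with hg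
  have hc : ∀ n, Continuous (g n) := by
    intro n
    have := ((contLogPow n).div_const ((n:ℝ) + 1)).neg
    exact this.congr (fun x => by simp only [hg, Pi.neg_apply]; ring)
  -- value of each term's integral
  have hint : ∀ n : ℕ, ∫ x in Ioo (0:ℝ) 1, g n x
      = 1 / (((n:ℝ) + 1) * ((n:ℝ) + 2) ^ 2) := by
    intro n
    have h1 : ∫ x in Ioo (0:ℝ) 1, g n x
        = -(1 / ((n:ℝ) + 1)) * ∫ x in Ioo (0:ℝ) 1, Real.log x * x ^ (n + 1) := by
      rw [← MeasureTheory.integral_const_mul]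
      congr 1; funext x; simp [hg]; ring
    have h2 : ∫ x in Ioo (0:ℝ) 1, Real.log x * x ^ (n + 1) = -(1 / ((n:ℝ) + 2) ^ 2) := by
      rw [← MeasureTheory.integral_Ioc_eq_integral_Ioo,
        ← intervalIntegral.integral_of_le zero_le_one]
      exact integral_log_mul_pow n
    rw [h1, h2]
    field_simp
  -- pointwise summation
  have hsum : ∀ x ∈ Ioo (0:ℝ) 1,
      HasSum (fun n => g n x) (Real.log x * Real.log (1 - x)) := by
    intro x hx
    have habs : |x| < 1 := by rw [abs_of_pos hx.1]; exact hx.2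
    have h := (Real.hasSum_pow_div_log_of_abs_lt_one habs).mul_left (-(Real.log x))
    rw [neg_mul_neg] at h
    convert h using 2 with n
    · rfl
    simp only [hg]
    ring
  -- integrability / finiteness
  have hIg : ∀ n, IntegrableOn (g n) (Ioo (0:ℝ) 1) volume := by
    intro n
    exact ((hc n).integrableOn_Icc (a := 0) (b := 1)).mono_set Ioo_subset_Icc_self
  have hnorm : ∀ n : ℕ, ∫ x in Ioo (0:ℝ) 1, ‖g n x‖
      = 1 / (((n:ℝ) + 1) * ((n:ℝ) + 2) ^ 2) := by
    intro n
    rw [← hint n]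
    apply setIntegral_congr_fun measurableSet_Ioo
    intro x hx
    have hlog : Real.log x ≤ 0 := Real.log_nonpos hx.1.le hx.2.le
    have hx0 : (0:ℝ) ≤ x := hx.1.le
    have hxp : (0:ℝ) ≤ x ^ (n + 1) / ((n:ℝ) + 1) := by positivity
    have : 0 ≤ g n x := by
      simp only [hg]
      nlinarith
    exact Real.norm_of_nonneg this
  have hSummable : Summable (fun n : ℕ => 1 / (((n:ℝ) + 1) * ((n:ℝ) + 2) ^ 2)) :=
    hasSum_aux.summable
  have hfin : ∑' n : ℕ, ∫⁻ x, ‖g n x‖₊ ∂(volume.restrict (Ioo (0:ℝ) 1)) ≠ ⊤ := by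
    have heq : ∀ n : ℕ, ∫⁻ x, ‖g n x‖₊ ∂(volume.restrict (Ioo (0:ℝ) 1))
        = ENNReal.ofReal (1 / (((n:ℝ) + 1) * ((n:ℝ) + 2) ^ 2)) := by
      intro n
      simp_rw [← enorm_eq_nnnorm]
      rw [← ofReal_integral_norm_eq_lintegral_enorm (hIg n), hnorm n]
    simp only [heq]
    rw [← ENNReal.ofReal_tsum_of_nonneg (fun n => by positivity) hSummable]
    exact ENNReal.ofReal_ne_top
  have hmeas : ∀ n : ℕ, AEStronglyMeasurable (g n) (volume.restrict (Ioo (0:ℝ) 1)) :=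
    fun n => (hc n).aestronglyMeasurable.restrict
  -- put everything together
  rw [intervalIntegral.integral_of_le zero_le_one, MeasureTheory.integral_Ioc_eq_integral_Ioo]
  have hcongr : ∫ x in Ioo (0:ℝ) 1, Real.log x * Real.log (1 - x)
      = ∫ x in Ioo (0:ℝ) 1, ∑' n, g n x := by
    apply setIntegral_congr_fun measurableSet_Ioo
    intro x hx
    exact ((hsum x hx).tsum_eq).symm
  rw [hcongr, MeasureTheory.integral_tsum hmeas hfin]
  simp only [hint]
  exact hasSum_aux.tsum_eq
end

section
/- For every integer n ≥ 2, ∑_{k=0}^∞ 1/C(n+k, k) = n/(n−1), where C denotes the binomial coefficient. -/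
theorem sum_inv_binomial (n : ℕ) (hn : 2 ≤ n) :
    ∑' k : ℕ, (1 : ℝ) / (Nat.choose (n + k) k) = (n : ℝ) / ((n : ℝ) - 1) := by
  set b : ℕ → ℝ := fun k => 1 / (Nat.choose (n - 1 + k) k) with hb_def
  have hnR : (1:ℝ) < (n:ℝ) := by exact_mod_cast hn.trans_lt' (by norm_num)
  have hn1R : (n:ℝ) - 1 ≠ 0 := by linarith
  have key : ∀ k : ℕ, (1:ℝ) / (Nat.choose (n + k) k)
      = (n:ℝ) / ((n:ℝ) - 1) * (b k - b (k+1)) := by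
    intro k
    have h1 : n + k = (n - 1 + k) + 1 := by omega
    have h2 : n - 1 + (k + 1) = (n - 1 + k) + 1 := by omega
    set m := n - 1 + k with hm
    have hA : 0 < (Nat.choose m k) := Nat.choose_pos (by omega)
    have hB : 0 < (Nat.choose (m+1) k) := Nat.choose_pos (by omega)
    have hC : 0 < (Nat.choose (m+1) (k+1)) := Nat.choose_pos (by omega)
    have e1 : (k+1) * Nat.choose (m+1) (k+1) = (m+1) * Nat.choose m k := by
      rw [mul_comm]; exact (Nat.add_one_mul_choose_eq m k).symm
    have e2 : Nat.choose (m+1) (k+1) * (k+1) = Nat.choose (m+1) k * (m + 1 - k) := by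
      exact Nat.choose_succ_right_eq (m+1) k
    have hmk : m + 1 - k = n := by omega
    rw [hmk] at e2
    have e1R : ((k:ℝ)+1) * Nat.choose (m+1) (k+1) = ((m:ℝ)+1) * Nat.choose m k := by
      exact_mod_cast e1
    have e2R : (Nat.choose (m+1) (k+1) : ℝ) * ((k:ℝ)+1) = (Nat.choose (m+1) k : ℝ) * n := by
      exact_mod_cast e2
    have hAR : (Nat.choose m k : ℝ) ≠ 0 := by positivity
    have hBR : (Nat.choose (m+1) k : ℝ) ≠ 0 := by positivity
    have hCR : (Nat.choose (m+1) (k+1) : ℝ) ≠ 0 := by positivity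
    have hmR : ((m:ℝ)+1) = (n:ℝ) + k := by
      have : m + 1 = n + k := by omega
      exact_mod_cast this
    rw [h1, hb_def]
    simp only [h2, ← hm]
    field_simp
    have hBR' : (0:ℝ) < Nat.choose (m+1) k := by positivity
    have hCR' : (0:ℝ) < Nat.choose (m+1) (k+1) := by positivity
    have hAR' : (0:ℝ) < Nat.choose m k := by positivity
    nlinarith [e1R, e2R, hmR, mul_pos hBR' hCR', mul_pos hAR' hCR', mul_pos hAR' hBR']
  have hnonneg : ∀ k : ℕ, 0 ≤ (1:ℝ) / (Nat.choose (n + k) k) := by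
    intro k; positivity
  have hbtend : Filter.Tendsto b Filter.atTop (nhds 0) := by
    have hle : ∀ k, b k ≤ 1 / (k + 1) := by
      intro k
      have h : (k+1) ≤ Nat.choose (n - 1 + k) k := by
        calc (k+1) = Nat.choose (k+1) k := (Nat.choose_succ_self_right k).symm
        _ ≤ Nat.choose (n - 1 + k) k := Nat.choose_le_choose k (by omega)
      rw [hb_def]
      apply div_le_div_of_nonneg_left (by norm_num) (by positivity)
      exact_mod_cast h
    have hge : ∀ k, 0 ≤ b k := by intro k; rw [hb_def]; positivity
    exact squeeze_zero hge hle tendsto_one_div_add_atTop_nhds_zero_nat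
  have hsum : ∀ N, ∑ i ∈ Finset.range N, (1:ℝ) / (Nat.choose (n + i) i)
      = (n:ℝ) / ((n:ℝ) - 1) * (1 - b N) := by
    intro N
    have hb0 : b 0 = 1 := by simp [hb_def]
    calc ∑ i ∈ Finset.range N, (1:ℝ) / (Nat.choose (n + i) i)
        = ∑ i ∈ Finset.range N, (n:ℝ)/((n:ℝ)-1) * (b i - b (i+1)) :=
          Finset.sum_congr rfl fun i _ => key i
      _ = (n:ℝ)/((n:ℝ)-1) * ∑ i ∈ Finset.range N, (b i - b (i+1)) := by
          rw [Finset.mul_sum]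
      _ = (n:ℝ)/((n:ℝ)-1) * (1 - b N) := by rw [Finset.sum_range_sub' b, hb0]
  apply HasSum.tsum_eq
  rw [hasSum_iff_tendsto_nat_of_nonneg hnonneg]
  simp only [hsum]
  have h2 := ((hbtend.const_sub (1:ℝ)).const_mul ((n:ℝ)/((n:ℝ)-1)))
  simpa using h2
end
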